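/- For all real numbers x₁ ≠ x₂ and every integer n ≥ 2: if n is even, then (x₁^n − x₂^n)/(x₁ − x₂) = (x₁ + x₂) · ∏_{j=1}^{(n−2)/2} ( (x₁ + x₂)² − 4·x₁·x₂·cos²(πj/n) ), and if n is odd, then (x₁^n − x₂^n)/(x₁ − x₂) = ∏_{j=1}^{(n−1)/2} ( (x₁ + x₂)² − 4·x₁·x₂·cos²(πj/n) ). -/

import Mathlib

open Finset Complex

noncomputable def zeta8 (n : ℕ) : ℂ := Complex.exp (2 * Real.pi * Complex.I / n)

lemma prod_range8 (n : ℕ) (hn : 0 < n) (x y : ℂ) :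
    x ^ n - y ^ n = ∏ k ∈ Finset.range n, (x - (zeta8 n) ^ k * y) := by
  have hprim : IsPrimitiveRoot (zeta8 n) n := Complex.isPrimitiveRoot_exp n hn.ne'
  rw [hprim.pow_sub_pow_eq_prod_sub_mul x y hn]
  refine (Finset.prod_nbij (fun k => (zeta8 n) ^ k) ?_ ?_ ?_ (fun _ _ => rfl)).symm
  · intro k _
    rw [Polynomial.mem_nthRootsFinset hn, ← pow_mul, mul_comm k n, pow_mul,
      hprim.pow_eq_one, one_pow]
  · intro a ha b hb hab
    exact hprim.pow_inj (Finset.mem_range.mp ha) (Finset.mem_range.mp hb) hab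
  · intro ξ hξ
    have : NeZero n := ⟨hn.ne'⟩
    obtain ⟨i, hi, hip⟩ := hprim.eq_pow_of_pow_eq_one
      ((Polynomial.mem_nthRootsFinset hn 1).mp hξ)
    exact ⟨i, Finset.mem_coe.mpr (Finset.mem_range.mpr hi), hip⟩

lemma zeta8_pow (n k : ℕ) (hn : n ≠ 0) :
    zeta8 n ^ k = Complex.exp (((2 * Real.pi * k / n : ℝ) : ℂ) * Complex.I) := by
  rw [zeta8, ← Complex.exp_nat_mul]
  congr 1
  have hn' : (n : ℂ) ≠ 0 := Nat.cast_ne_zero.mpr hn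
  push_cast
  field_simp

lemma zeta8_pow_sub (n k : ℕ) (hn : n ≠ 0) (hk : k ≤ n) :
    zeta8 n ^ (n - k) = Complex.exp (-(((2 * Real.pi * k / n : ℝ) : ℂ) * Complex.I)) := by
  rw [zeta8_pow n (n-k) hn]
  have hn' : (n : ℂ) ≠ 0 := Nat.cast_ne_zero.mpr hn
  have h1 : ((2 * Real.pi * (n - k : ℕ) / n : ℝ) : ℂ) * Complex.I
      = 2 * Real.pi * Complex.I + -(((2 * Real.pi * k / n : ℝ) : ℂ) * Complex.I) := by
    push_cast [Nat.cast_sub hk]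
    field_simp
    ring
  rw [h1, Complex.exp_add, Complex.exp_two_pi_mul_I, one_mul]

lemma pair_mul (n k : ℕ) (hn : n ≠ 0) (hk : k ≤ n) (x y : ℝ) :
    ((x : ℂ) - zeta8 n ^ k * y) * ((x : ℂ) - zeta8 n ^ (n - k) * y)
      = (((x + y) ^ 2 - 4 * x * y * Real.cos (Real.pi * k / n) ^ 2 : ℝ) : ℂ) := by
  set θ : ℝ := 2 * Real.pi * k / n with hθ
  have h1 : zeta8 n ^ k = Complex.exp ((θ : ℂ) * Complex.I) := zeta8_pow n k hn
  have h2 : zeta8 n ^ (n - k) = Complex.exp (-((θ : ℂ) * Complex.I)) := zeta8_pow_sub n k hn hk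
  have hmul : zeta8 n ^ k * zeta8 n ^ (n - k) = 1 := by
    rw [h1, h2, ← Complex.exp_add, add_neg_cancel, Complex.exp_zero]
  have hadd : zeta8 n ^ k + zeta8 n ^ (n - k) = ((2 * Real.cos θ : ℝ) : ℂ) := by
    rw [h1, h2, Complex.exp_mul_I, neg_mul_eq_neg_mul, ← Complex.ofReal_neg,
      Complex.exp_mul_I]
    rw [← Complex.ofReal_cos, ← Complex.ofReal_sin, ← Complex.ofReal_cos,
      ← Complex.ofReal_sin, Real.cos_neg, Real.sin_neg]
    push_cast
    ring
  have expand : ((x : ℂ) - zeta8 n ^ k * y) * ((x : ℂ) - zeta8 n ^ (n - k) * y)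
      = (x:ℂ)^2 - (zeta8 n ^ k + zeta8 n ^ (n - k)) * x * y
        + (zeta8 n ^ k * zeta8 n ^ (n - k)) * (y:ℂ)^2 := by ring
  rw [expand, hmul, hadd]
  have hcos : Real.cos (Real.pi * k / n) ^ 2 = 1 / 2 + Real.cos θ / 2 := by
    rw [Real.cos_sq]
    congr 2
    rw [hθ]; ring
  rw [hcos]
  push_cast
  ring

lemma prod_reflect (n m : ℕ) (hm : 2 * m ≤ n) (hm1 : m < n) (f : ℕ → ℂ) :
    ∏ k ∈ Finset.Ioc m (n - 1), f k = ∏ k ∈ Finset.Ioc 0 (n - 1 - m), f (n - k) := by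
  refine Finset.prod_nbij' (fun k => n - k) (fun k => n - k) ?_ ?_ ?_ ?_ ?_ <;>
    intro a ha <;> simp only [Finset.mem_Ioc] at ha ⊢
  · omega
  · omega
  · omega
  · omega
  · congr 1; omega

lemma paired_prod (n m l : ℕ) (hn : n ≠ 0) (hl : 2 * l ≤ n) (hln : l < n)
    (hml : n - 1 - l = m) (x y : ℝ) :
    (∏ k ∈ Finset.Ioc 0 m, ((x:ℂ) - zeta8 n ^ k * y)) *
      ∏ k ∈ Finset.Ioc l (n - 1), ((x:ℂ) - zeta8 n ^ k * y)
    = ((∏ j ∈ Finset.Icc 1 m, ((x + y) ^ 2 - 4 * x * y * Real.cos (Real.pi * j / n) ^ 2) : ℝ) : ℂ) := by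
  rw [prod_reflect n l hl hln, hml, ← Finset.prod_mul_distrib, Complex.ofReal_prod]
  have hset : Finset.Icc 1 m = Finset.Ioc 0 m := by
    ext a; simp only [Finset.mem_Icc, Finset.mem_Ioc]; omega
  rw [hset]
  refine Finset.prod_congr rfl fun k hk => ?_
  simp only [Finset.mem_Ioc] at hk
  exact pair_mul n k hn (by omega) x y

theorem stmt8 (x₁ x₂ : ℝ) (hne : x₁ ≠ x₂) (n : ℕ) (hn : 2 ≤ n) :
    (Even n →
      (x₁ ^ n - x₂ ^ n) / (x₁ - x₂) =
        (x₁ + x₂) * ∏ j ∈ Finset.Icc 1 ((n - 2) / 2),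
          ((x₁ + x₂) ^ 2 - 4 * x₁ * x₂ * Real.cos (Real.pi * j / n) ^ 2)) ∧
    (Odd n →
      (x₁ ^ n - x₂ ^ n) / (x₁ - x₂) =
        ∏ j ∈ Finset.Icc 1 ((n - 1) / 2),
          ((x₁ + x₂) ^ 2 - 4 * x₁ * x₂ * Real.cos (Real.pi * j / n) ^ 2)) := by
  have hn0 : 0 < n := by omega
  have hsub : x₁ - x₂ ≠ 0 := sub_ne_zero.mpr hne
  have base : ((x₁:ℂ) ^ n - (x₂:ℂ) ^ n)
      = ((x₁:ℂ) - x₂) * ∏ k ∈ Finset.Ioc 0 (n - 1), ((x₁:ℂ) - zeta8 n ^ k * x₂) := by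
    rw [prod_range8 n hn0]
    have hr : Finset.range n = insert 0 (Finset.Ioc 0 (n - 1)) := by
      ext a; simp only [Finset.mem_range, Finset.mem_insert, Finset.mem_Ioc]; omega
    rw [hr, Finset.prod_insert (by simp), pow_zero, one_mul]
  constructor
  · -- even case
    intro he
    obtain ⟨m, hm⟩ : ∃ m, n = 2 * m + 2 := by
      obtain ⟨r, hr⟩ := he; exact ⟨r - 1, by omega⟩
    have hm2 : (n - 2) / 2 = m := by omega
    have hsplit : ∏ k ∈ Finset.Ioc 0 (n - 1), ((x₁:ℂ) - zeta8 n ^ k * x₂)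
        = ((∏ k ∈ Finset.Ioc 0 m, ((x₁:ℂ) - zeta8 n ^ k * x₂)) *
           ∏ k ∈ Finset.Ioc m (m + 1), ((x₁:ℂ) - zeta8 n ^ k * x₂)) *
          ∏ k ∈ Finset.Ioc (m + 1) (n - 1), ((x₁:ℂ) - zeta8 n ^ k * x₂) := by
      rw [Finset.prod_Ioc_consecutive _ (Nat.zero_le m) (by omega : m ≤ m + 1),
        Finset.prod_Ioc_consecutive _ (Nat.zero_le (m+1)) (by omega : m + 1 ≤ n - 1)]
    have hmid : ∏ k ∈ Finset.Ioc m (m + 1), ((x₁:ℂ) - zeta8 n ^ k * x₂) = ((x₁ + x₂ : ℝ) : ℂ) := by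
      have h1 : Finset.Ioc m (m + 1) = {m + 1} := by
        ext a; simp only [Finset.mem_Ioc, Finset.mem_singleton]; omega
      rw [h1, Finset.prod_singleton]
      have h2 : zeta8 n ^ (m + 1) = -1 := by
        rw [zeta8_pow n (m+1) hn0.ne']
        have h3 : (2 * Real.pi * ((m + 1 : ℕ) : ℝ) / n : ℝ) = Real.pi := by
          rw [hm]; push_cast; field_simp
        rw [h3, Complex.exp_pi_mul_I]
      rw [h2]
      push_cast
      ring
    have hpair : (∏ k ∈ Finset.Ioc 0 m, ((x₁:ℂ) - zeta8 n ^ k * x₂)) *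
        ∏ k ∈ Finset.Ioc (m + 1) (n - 1), ((x₁:ℂ) - zeta8 n ^ k * x₂)
        = ((∏ j ∈ Finset.Icc 1 m, ((x₁ + x₂) ^ 2 - 4 * x₁ * x₂ * Real.cos (Real.pi * j / n) ^ 2) : ℝ) : ℂ) :=
      paired_prod n m (m + 1) hn0.ne' (by omega) (by omega) (by omega) x₁ x₂
    have key : (x₁ ^ n - x₂ ^ n)
        = (x₁ - x₂) * ((x₁ + x₂) * ∏ j ∈ Finset.Icc 1 ((n - 2) / 2),
            ((x₁ + x₂) ^ 2 - 4 * x₁ * x₂ * Real.cos (Real.pi * j / n) ^ 2)) := by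
      have := base
      rw [hsplit, hmid] at this
      apply Complex.ofReal_injective
      push_cast
      rw [this, hm2]
      rw [mul_comm (∏ k ∈ Finset.Ioc 0 m, ((x₁:ℂ) - zeta8 n ^ k * x₂)) ((x₁ + x₂ : ℝ) : ℂ),
        mul_assoc, hpair]
      push_cast
      ring
    rw [key, mul_comm (x₁ - x₂), mul_div_assoc, div_self hsub, mul_one]
  · -- odd case
    intro ho
    obtain ⟨m, hm⟩ : ∃ m, n = 2 * m + 1 := by
      obtain ⟨r, hr⟩ := ho; exact ⟨r, by omega⟩
    have hm2 : (n - 1) / 2 = m := by omega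
    have hsplit : ∏ k ∈ Finset.Ioc 0 (n - 1), ((x₁:ℂ) - zeta8 n ^ k * x₂)
        = (∏ k ∈ Finset.Ioc 0 m, ((x₁:ℂ) - zeta8 n ^ k * x₂)) *
          ∏ k ∈ Finset.Ioc m (n - 1), ((x₁:ℂ) - zeta8 n ^ k * x₂) := by
      rw [Finset.prod_Ioc_consecutive _ (Nat.zero_le m) (by omega : m ≤ n - 1)]
    have hpair := paired_prod n m m hn0.ne' (by omega) (by omega) (by omega) x₁ x₂
    have key : (x₁ ^ n - x₂ ^ n)
        = (x₁ - x₂) * ∏ j ∈ Finset.Icc 1 ((n - 1) / 2),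
            ((x₁ + x₂) ^ 2 - 4 * x₁ * x₂ * Real.cos (Real.pi * j / n) ^ 2) := by
      have := base
      rw [hsplit, hpair] at this
      apply Complex.ofReal_injective
      push_cast
      rw [this, hm2]
      push_cast
      ring
    rw [key, mul_comm (x₁ - x₂), mul_div_assoc, div_self hsub, mul_one]
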